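/- arXiv:math/0312112 — 2 statements merged into one kernel-verified Lean document; each statement's English description precedes it below -/
import Mathlib

section
/- Let $d=2m+1\ge 5$ and $n\ge k\ge d$, and for $1\le i\le d-1$ define $f_{0,i}(d,k,n)=(i+1)\phi_i(d,k)+(n-k)\left[(i+1)c_i(d,k)+\phi_{i-1}(d-1,k-1)-\alpha_i(d,k)\right]$, with $\phi$, $c$, $\alpha$ as in Dinh's formulas. Then for $i=d-1$ this satisfies $f_{0,d-1}(d,k,n)=2 f_{d-2}(d,k,n)$ where $f_{d-2}(d,k,n)=\phi_{d-2}(d,k)+(n-k)c_{d-2}(d,k)$. -/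
/-- Integer binomial coefficient, zero outside the range `0 ≤ b ≤ a`. -/
def ch (a b : ℤ) : ℤ := if 0 ≤ b ∧ b ≤ a then ((a.toNat).choose b.toNat : ℤ) else 0

/-- `N(s,t,u)` from Dinh's count of new faces of ordinary polytopes. -/
def N (s t u : ℤ) : ℤ :=
  ch (u - t) t * ch (s - u + t) (u - t) + ch (u - 1 - t) t * ch (s - u + t) (u - 1 - t)

/-- `φ_i(d,k)`: the number of `i`-faces of the cyclic `d`-polytope with `k+1` vertices. -/
def phi (d k : ℕ) (i : ℤ) : ℤ :=
  (∑ j ∈ Finset.range (d / 2 + 1),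
      (ch (j : ℤ) ((d : ℤ) - 1 - i) + ch ((d : ℤ) - j) ((d : ℤ) - 1 - i)) *
        ch ((k : ℤ) - d + j) (j : ℤ))
    - (if Even d then 1 else 0) * ch ((d / 2 : ℕ) : ℤ) (2 * ((d / 2 : ℕ) : ℤ) - 1 - i) *
        ch ((k : ℤ) - (d / 2 : ℕ)) ((d / 2 : ℕ) : ℤ)

/-- `c_i(d,k)` for `d = 2m+1`: the increment of the `i`-th face number of ordinary
polytopes. -/
def cc (m k : ℕ) (i : ℤ) : ℤ :=
  ∑ j ∈ Finset.range m, ch ((m : ℤ) + 1) (i - j) * ch ((k : ℤ) - m - 2) (j : ℤ)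

/-- `α_i(d,k)` for `d = 2m+1`: the number of new `i`-faces in Dinh's construction. -/
def alpha (m k i : ℕ) : ℤ :=
  ∑ j ∈ Finset.Icc (i - m) (i / 2),
    (2 * N ((k : ℤ) - 1) (j : ℤ) (i : ℤ) - N ((k : ℤ) - 2) (j : ℤ) (i : ℤ))

lemma ch_natCast (a b : ℕ) : ch (a:ℤ) (b:ℤ) = (a.choose b : ℤ) := by
  simp only [ch, Int.toNat_natCast]
  split
  · rfl
  · next h =>
    push_neg at h
    have hab : (a:ℤ) < b := h (Int.natCast_nonneg b)
    rw [Nat.choose_eq_zero_of_lt (by exact_mod_cast hab), Nat.cast_zero]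

lemma hockey (t m : ℕ) : ∑ j ∈ Finset.range (m+1), (t+j).choose j = (t+m+1).choose m := by
  induction m with
  | zero => simp
  | succ m ih =>
    rw [Finset.sum_range_succ, ih, show t+(m+1) = t+m+1 from by ring]
    exact (Nat.choose_succ_succ _ _).symm

lemma phi_top (m t : ℕ) :
    phi (2*m+1) (2*m+1+t) (2*(m:ℤ)) = 2 * ((t+m+1).choose m : ℤ) := by
  unfold phi
  rw [show (2*m+1)/2 = m from by omega, if_neg (by simp [Nat.even_iff]),
      zero_mul, zero_mul, sub_zero]
  have key : ∀ j ∈ Finset.range (m+1),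
      (ch (j:ℤ) (((2*m+1:ℕ):ℤ) - 1 - 2*(m:ℤ)) +
        ch (((2*m+1:ℕ):ℤ) - (j:ℤ)) (((2*m+1:ℕ):ℤ) - 1 - 2*(m:ℤ))) *
        ch (((2*m+1+t:ℕ):ℤ) - ((2*m+1:ℕ):ℤ) + (j:ℤ)) (j:ℤ)
      = 2 * (((t+j).choose j : ℕ) : ℤ) := by
    intro j hj
    rw [show ((2*m+1:ℕ):ℤ) - 1 - 2*(m:ℤ) = ((0:ℕ):ℤ) by push_cast; ring,
        show ((2*m+1:ℕ):ℤ) - (j:ℤ) = ((2*m+1-j:ℕ):ℤ) by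
          rw [Nat.cast_sub (by simpa [Nat.lt_succ_iff] using Finset.mem_range.mp hj |>.le.trans (by omega))],
        show ((2*m+1+t:ℕ):ℤ) - ((2*m+1:ℕ):ℤ) + (j:ℤ) = ((t+j:ℕ):ℤ) by push_cast; ring,
        ch_natCast, ch_natCast, ch_natCast]
    simp
  rw [Finset.sum_congr rfl key, ← Finset.mul_sum, ← Nat.cast_sum, hockey]

lemma phi_sub (m t : ℕ) :
    phi (2*m+1) (2*m+1+t) (2*(m:ℤ)-1) = (2*(m:ℤ)+1) * ((t+m+1).choose m : ℤ) := by
  unfold phi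
  rw [show (2*m+1)/2 = m from by omega, if_neg (by simp [Nat.even_iff]),
      zero_mul, zero_mul, sub_zero]
  have key : ∀ j ∈ Finset.range (m+1),
      (ch (j:ℤ) (((2*m+1:ℕ):ℤ) - 1 - (2*(m:ℤ)-1)) +
        ch (((2*m+1:ℕ):ℤ) - (j:ℤ)) (((2*m+1:ℕ):ℤ) - 1 - (2*(m:ℤ)-1))) *
        ch (((2*m+1+t:ℕ):ℤ) - ((2*m+1:ℕ):ℤ) + (j:ℤ)) (j:ℤ)
      = (2*(m:ℤ)+1) * (((t+j).choose j : ℕ) : ℤ) := by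
    intro j hj
    have hjm : j ≤ m := by simpa [Nat.lt_succ_iff] using hj
    rw [show ((2*m+1:ℕ):ℤ) - 1 - (2*(m:ℤ)-1) = ((1:ℕ):ℤ) by push_cast; ring,
        show ((2*m+1:ℕ):ℤ) - (j:ℤ) = ((2*m+1-j:ℕ):ℤ) by
          rw [Nat.cast_sub (by omega)],
        show ((2*m+1+t:ℕ):ℤ) - ((2*m+1:ℕ):ℤ) + (j:ℤ) = ((t+j:ℕ):ℤ) by push_cast; ring,
        ch_natCast, ch_natCast, ch_natCast, Nat.choose_one_right, Nat.choose_one_right]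
    have : ((j:ℕ):ℤ) + ((2*m+1-j:ℕ):ℤ) = 2*(m:ℤ)+1 := by
      rw [Nat.cast_sub (by omega)]; push_cast; ring
    rw [this]
  rw [Finset.sum_congr rfl key, ← Finset.mul_sum, ← Nat.cast_sum, hockey]

lemma phi_even (m t : ℕ) (hm : 1 ≤ m) :
    phi (2*m) (2*m+t) (2*(m:ℤ)-1)
      = 2 * ((t+m+1).choose m : ℤ) - ((t+m).choose m : ℤ) := by
  unfold phi
  rw [show (2*m)/2 = m from by omega, if_pos (even_two_mul m), one_mul]
  have key : ∀ j ∈ Finset.range (m+1),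
      (ch (j:ℤ) (((2*m:ℕ):ℤ) - 1 - (2*(m:ℤ)-1)) +
        ch (((2*m:ℕ):ℤ) - (j:ℤ)) (((2*m:ℕ):ℤ) - 1 - (2*(m:ℤ)-1))) *
        ch (((2*m+t:ℕ):ℤ) - ((2*m:ℕ):ℤ) + (j:ℤ)) (j:ℤ)
      = 2 * (((t+j).choose j : ℕ) : ℤ) := by
    intro j hj
    have hjm : j ≤ m := by simpa [Nat.lt_succ_iff] using hj
    rw [show ((2*m:ℕ):ℤ) - 1 - (2*(m:ℤ)-1) = ((0:ℕ):ℤ) by push_cast; ring,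
        show ((2*m:ℕ):ℤ) - (j:ℤ) = ((2*m-j:ℕ):ℤ) by rw [Nat.cast_sub (by omega)],
        show ((2*m+t:ℕ):ℤ) - ((2*m:ℕ):ℤ) + (j:ℤ) = ((t+j:ℕ):ℤ) by push_cast; ring,
        ch_natCast, ch_natCast, ch_natCast]
    simp
  rw [Finset.sum_congr rfl key, ← Finset.mul_sum, ← Nat.cast_sum, hockey]
  congr 1
  rw [show 2 * ((m:ℕ):ℤ) - 1 - (2*(m:ℤ)-1) = ((0:ℕ):ℤ) by push_cast; ring,
      show (((2*m+t:ℕ)):ℤ) - ((m:ℕ):ℤ) = ((t+m:ℕ):ℤ) by push_cast; ring,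
      ch_natCast, ch_natCast]
  simp

lemma cc_top (m2 t : ℕ) :
    cc (m2+2) (2*m2+5+t) (2*(m2:ℤ)+4) = ((t+m2+1).choose (m2+1) : ℤ) := by
  unfold cc
  rw [show m2+2 = (m2+1)+1 from rfl, Finset.sum_range_succ, Finset.sum_range_succ]
  have harg : ∀ j : ℕ, ((2*m2+5+t:ℕ):ℤ) - ((m2+2:ℕ):ℤ) - 2 = ((t+m2+1:ℕ):ℤ) := by
    intro j; push_cast; ring
  have hzero : ∀ j ∈ Finset.range m2,
      ch (((m2+2:ℕ):ℤ) + 1) (2*(m2:ℤ)+4 - (j:ℤ)) *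
        ch (((2*m2+5+t:ℕ):ℤ) - ((m2+2:ℕ):ℤ) - 2) (j:ℤ) = 0 := by
    intro j hj
    have hjm : j < m2 := Finset.mem_range.mp hj
    rw [show (((m2+2:ℕ)):ℤ) + 1 = ((m2+3:ℕ):ℤ) by push_cast; ring,
        show 2*(m2:ℤ)+4 - (j:ℤ) = ((2*m2+4-j:ℕ):ℤ) by rw [Nat.cast_sub (by omega)]; push_cast; ring,
        ch_natCast, Nat.choose_eq_zero_of_lt (by omega), Nat.cast_zero, zero_mul]
  rw [Finset.sum_eq_zero hzero, zero_add, harg 0,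
      show (((m2+2:ℕ)):ℤ) + 1 = ((m2+3:ℕ):ℤ) by push_cast; ring,
      show 2*(m2:ℤ)+4 - ((m2:ℕ):ℤ) = ((m2+4:ℕ):ℤ) by push_cast; ring,
      show 2*(m2:ℤ)+4 - ((m2+1:ℕ):ℤ) = ((m2+3:ℕ):ℤ) by push_cast; ring,
      ch_natCast, ch_natCast, ch_natCast, ch_natCast,
      Nat.choose_eq_zero_of_lt (by omega : m2+3 < m2+4), Nat.choose_self]
  push_cast
  ring

lemma cc_sub (m2 t : ℕ) :
    cc (m2+2) (2*m2+5+t) (2*(m2:ℤ)+3)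
      = ((t+m2+1).choose m2 : ℤ) + ((m2:ℤ)+3) * ((t+m2+1).choose (m2+1) : ℤ) := by
  unfold cc
  rw [show m2+2 = (m2+1)+1 from rfl, Finset.sum_range_succ, Finset.sum_range_succ]
  have harg : ((2*m2+5+t:ℕ):ℤ) - ((m2+2:ℕ):ℤ) - 2 = ((t+m2+1:ℕ):ℤ) := by push_cast; ring
  have hzero : ∀ j ∈ Finset.range m2,
      ch (((m2+2:ℕ):ℤ) + 1) (2*(m2:ℤ)+3 - (j:ℤ)) *
        ch (((2*m2+5+t:ℕ):ℤ) - ((m2+2:ℕ):ℤ) - 2) (j:ℤ) = 0 := by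
    intro j hj
    have hjm : j < m2 := Finset.mem_range.mp hj
    rw [show (((m2+2:ℕ)):ℤ) + 1 = ((m2+3:ℕ):ℤ) by push_cast; ring,
        show 2*(m2:ℤ)+3 - (j:ℤ) = ((2*m2+3-j:ℕ):ℤ) by rw [Nat.cast_sub (by omega)]; push_cast; ring,
        ch_natCast, Nat.choose_eq_zero_of_lt (by omega), Nat.cast_zero, zero_mul]
  rw [Finset.sum_eq_zero hzero, zero_add, harg,
      show (((m2+2:ℕ)):ℤ) + 1 = ((m2+3:ℕ):ℤ) by push_cast; ring,
      show 2*(m2:ℤ)+3 - ((m2:ℕ):ℤ) = ((m2+3:ℕ):ℤ) by push_cast; ring,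
      show 2*(m2:ℤ)+3 - ((m2+1:ℕ):ℤ) = ((m2+2:ℕ):ℤ) by push_cast; ring,
      ch_natCast, ch_natCast, ch_natCast, ch_natCast, Nat.choose_self,
      show (m2+3).choose (m2+2) = m2+3 from Nat.choose_succ_self_right (m2+2) ]
  push_cast
  ring

lemma alpha_val (m2 t : ℕ) :
    alpha (m2+2) (2*m2+5+t) (2*m2+4)
      = 2 * ((t+m2+2).choose (m2+2) : ℤ) - ((t+m2+1).choose (m2+2) : ℤ) := by
  unfold alpha
  rw [show (2*m2+4) - (m2+2) = m2+2 from by omega, show (2*m2+4)/2 = m2+2 from by omega,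
      Finset.Icc_self, Finset.sum_singleton]
  have hN : ∀ s' : ℕ, N ((s':ℤ)) ((m2+2:ℕ):ℤ) ((2*m2+4:ℕ):ℤ)
      = ((s' - (m2+2) : ℕ).choose (m2+2) : ℤ) ∨ True := fun _ => Or.inr trivial
  unfold N
  rw [show ((2*m2+4:ℕ):ℤ) - ((m2+2:ℕ):ℤ) = ((m2+2:ℕ):ℤ) by push_cast; ring,
      show ((2*m2+4:ℕ):ℤ) - 1 - ((m2+2:ℕ):ℤ) = ((m2+1:ℕ):ℤ) by push_cast; ring,
      show ((2*m2+5+t:ℕ):ℤ) - 1 - ((2*m2+4:ℕ):ℤ) + ((m2+2:ℕ):ℤ) = ((t+m2+2:ℕ):ℤ) by push_cast; ring,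
      show ((2*m2+5+t:ℕ):ℤ) - 2 - ((2*m2+4:ℕ):ℤ) + ((m2+2:ℕ):ℤ) = ((t+m2+1:ℕ):ℤ) by push_cast; ring,
      ch_natCast, ch_natCast, ch_natCast, ch_natCast, ch_natCast, ch_natCast,
      Nat.choose_self, Nat.choose_eq_zero_of_lt (by omega : m2+1 < m2+2)]
  push_cast
  ring

/-- Consistency of the flag number formula
`f_{0,i}(d,k,n) = (i+1)φ_i(d,k) + (n-k)[(i+1)c_i(d,k) + φ_{i-1}(d-1,k-1) - α_i(d,k)]`
of the ordinary polytope `P^{d,k,n}` at `i = d-1`: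
`f_{0,d-1} = 2 f_{d-2}`, where `f_{d-2} = φ_{d-2}(d,k) + (n-k)c_{d-2}(d,k)`. -/
theorem ordinary_flag_facet_identity (d m k n : ℕ) (hd : d = 2 * m + 1) (hd5 : 5 ≤ d)
    (hk : d ≤ k) (hn : k ≤ n) :
    (d : ℤ) * phi d k ((d : ℤ) - 1) +
        ((n : ℤ) - k) *
          ((d : ℤ) * cc m k ((d : ℤ) - 1) + phi (d - 1) (k - 1) ((d : ℤ) - 2)
            - alpha m k (d - 1))
      = 2 * (phi d k ((d : ℤ) - 2) + ((n : ℤ) - k) * cc m k ((d : ℤ) - 2)) := by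
  subst hd
  obtain ⟨m2, rfl⟩ : ∃ m2, m = m2 + 2 := ⟨m - 2, by omega⟩
  obtain ⟨t, rfl⟩ : ∃ t, k = 2*(m2+2)+1+t := ⟨k - (2*(m2+2)+1), by omega⟩
  rw [show ((2*(m2+2)+1:ℕ):ℤ) - 1 = 2*((m2+2:ℕ):ℤ) by push_cast; ring,
      show ((2*(m2+2)+1:ℕ):ℤ) - 2 = 2*((m2+2:ℕ):ℤ) - 1 by push_cast; ring,
      show 2*(m2+2)+1-1 = 2*(m2+2) from rfl,
      show 2*(m2+2)+1+t-1 = 2*(m2+2)+t from by omega]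
  rw [phi_top, phi_sub, phi_even (m2+2) t (by omega)]
  rw [show (2*((m2+2:ℕ):ℤ) - 1) = 2*(m2:ℤ)+3 by push_cast; ring,
      show (2*((m2+2:ℕ):ℤ)) = 2*(m2:ℤ)+4 by push_cast; ring,
      show 2*(m2+2)+1+t = 2*m2+5+t from by ring,
      show 2*(m2+2) = 2*m2+4 from by ring]
  rw [cc_top, cc_sub, alpha_val]
  rw [show t+(m2+2)+1 = t+m2+3 from by ring, show t+(m2+2) = t+m2+2 from by ring]
  have P1 : ((t+m2+3).choose (m2+2) : ℤ)
      = ((t+m2+2).choose (m2+1) : ℤ) + ((t+m2+2).choose (m2+2) : ℤ) := by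
    rw [show t+m2+3 = (t+m2+2)+1 from by ring, show m2+2 = (m2+1)+1 from rfl,
        Nat.choose_succ_succ']
    push_cast; ring
  have P2 : ((t+m2+2).choose (m2+2) : ℤ)
      = ((t+m2+1).choose (m2+1) : ℤ) + ((t+m2+1).choose (m2+2) : ℤ) := by
    rw [show t+m2+2 = (t+m2+1)+1 from by ring, show m2+2 = (m2+1)+1 from rfl,
        Nat.choose_succ_succ']
    push_cast; ring
  have P3 : ((t+m2+2).choose (m2+1) : ℤ)
      = ((t+m2+1).choose m2 : ℤ) + ((t+m2+1).choose (m2+1) : ℤ) := by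
    rw [show t+m2+2 = (t+m2+1)+1 from by ring, show m2+1 = m2+1 from rfl,
        Nat.choose_succ_succ']
    push_cast; ring
  rw [P1, P2, P3]
  push_cast
  ring
end

section
/- Let $d=2m+1\ge 5$ and $n\ge k\ge d$. With $h_i=\binom{k-d+i}{i}+(n-k)\binom{k-d+i-1}{i-1}$ for $0\le i\le m$ and $h_{d-i}=h_i$: (a) if $k=d$ then $h_i=n-d+1$ for all $1\le i\le d-1$ (the minimal $h$-vector, attained by the multiplex); (b) if $k=n$ then $h_i=\binom{n-d+i}{i}$ for $1\le i\le m$ (the maximal $h$-vector, attained by the cyclic polytope); (c) for fixed $d,n$ the value $h_i$ is weakly increasing in $k$ for each fixed $i\le m$. -/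
lemma ch_cast (a b : ℕ) : ch (a : ℤ) (b : ℤ) = (a.choose b : ℤ) := by
  unfold ch
  split
  · simp
  · rename_i h
    have hba : a < b := by omega
    rw [Nat.choose_eq_zero_of_lt hba]
    simp

lemma ch_eq_of (x y : ℤ) (a b : ℕ) (hx : x = a) (hy : y = b) :
    ch x y = (a.choose b : ℤ) := by rw [hx, hy, ch_cast]

lemma ch_neg (a : ℤ) : ch a (-1) = 0 := by
  unfold ch
  split
  · omega
  · rfl

lemma step_lemma (a c j : ℕ) (hc : 1 ≤ c) :
    (a + j + 1).choose (j + 1) + c * (a + j).choose j ≤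
      (a + 1 + j + 1).choose (j + 1) + (c - 1) * (a + 1 + j).choose j := by
  have pascal : (a + 1 + j + 1).choose (j + 1)
      = (a + j + 1).choose j + (a + j + 1).choose (j + 1) := by
    have := Nat.choose_succ_succ (a + j + 1) j
    convert this using 2 <;> omega
  have hmono : (a + j).choose j ≤ (a + j + 1).choose j :=
    Nat.choose_le_choose j (by omega)
  have h2 : (c - 1) * (a + j).choose j ≤ (c - 1) * (a + j + 1).choose j :=
    Nat.mul_le_mul_left _ hmono
  have ha : a + 1 + j = a + j + 1 := by omega
  rw [pascal, ha]
  have hc' : c = (c - 1) + 1 := by omega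
  have hce : c * (a + j).choose j = (c - 1) * (a + j).choose j + (a + j).choose j := by
    nth_rewrite 1 [hc']
    rw [Nat.add_mul, one_mul]
  calc (a + j + 1).choose (j + 1) + c * (a + j).choose j
      = (a + j + 1).choose (j + 1) + (c - 1) * (a + j).choose j + (a + j).choose j := by
        omega
    _ ≤ (a + j + 1).choose (j + 1) + (c - 1) * (a + j + 1).choose j + (a + j + 1).choose j := by
        omega
    _ = (a + j + 1).choose j + (a + j + 1).choose (j + 1) + (c - 1) * (a + j + 1).choose j := by
        ring

lemma mono_lemma (b : ℕ) : ∀ a c j : ℕ, b ≤ c →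
    (a + j + 1).choose (j + 1) + c * (a + j).choose j ≤
      (a + b + j + 1).choose (j + 1) + (c - b) * (a + b + j).choose j := by
  induction b with
  | zero => intro a c j _; simp
  | succ b ih =>
    intro a c j hbc
    have h1 := step_lemma a c j (by omega)
    have h2 := ih (a + 1) (c - 1) j (by omega)
    have e1 : a + 1 + b = a + (b + 1) := by omega
    have e2 : c - 1 - b = c - (b + 1) := by omega
    rw [e1, e2] at h2
    omega

/-- Extreme and monotone behaviour of the toric `h`-vectors
`H k i = C(k-d+i,i) + (n-k)C(k-d+i-1,i-1)` of ordinary polytopes `P^{d,k,n}`: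
(a) for `k = d` (the multiplex) all middle entries equal `n-d+1`;
(b) for `k = n` (the cyclic polytope) `h_i = C(n-d+i,i)`;
(c) for fixed `d, n` each `h_i` (`i ≤ m`) is weakly increasing in `k`. -/
theorem ordinary_h_vector_extremes (d m n : ℕ) (hd : d = 2 * m + 1) (hd5 : 5 ≤ d)
    (hn : d ≤ n)
    (H : ℕ → ℕ → ℤ)
    (hH : ∀ k i, H k i =
      ch ((k : ℤ) - d + i) (i : ℤ) + ((n : ℤ) - k) * ch ((k : ℤ) - d + i - 1) ((i : ℤ) - 1)) :
    (∀ i, 1 ≤ i → i ≤ d - 1 → (if i ≤ m then H d i else H d (d - i)) = (n : ℤ) - d + 1) ∧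
    (∀ i, 1 ≤ i → i ≤ m → H n i = ch ((n : ℤ) - d + i) (i : ℤ)) ∧
    (∀ k k' i, d ≤ k → k ≤ k' → k' ≤ n → i ≤ m → H k i ≤ H k' i) := by
  -- value of H d j for 1 ≤ j
  have hmultiplex : ∀ j : ℕ, 1 ≤ j → H d j = (n : ℤ) - d + 1 := by
    intro j hj
    rw [hH]
    rw [ch_eq_of _ _ j j (by omega) rfl,
        ch_eq_of _ _ (j - 1) (j - 1) (by omega) (by omega)]
    simp [Nat.choose_self]
    ring
  refine ⟨?_, ?_, ?_⟩
  · intro i hi1 hi2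
    split
    · exact hmultiplex i hi1
    · exact hmultiplex (d - i) (by omega)
  · intro i hi1 him
    rw [hH]
    have h0 : (n : ℤ) - n = 0 := by ring
    rw [h0]
    ring
  · intro k k' i hdk hkk' hk'n him
    rcases Nat.eq_zero_or_pos i with hi0 | hi1
    · subst hi0
      rw [hH, hH]
      simp only [Nat.cast_zero]
      rw [ch_eq_of ((k : ℤ) - d + 0) _ (k - d) 0 (by omega) (by norm_num),
          ch_eq_of ((k' : ℤ) - d + 0) _ (k' - d) 0 (by omega) (by norm_num)]
      norm_num [show (0:ℤ) - 1 = -1 from by norm_num, ch_neg, Nat.choose_zero_right]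
    · obtain ⟨j, rfl⟩ : ∃ j, i = j + 1 := ⟨i - 1, by omega⟩
      rw [hH, hH]
      rw [ch_eq_of _ _ (k - d + j + 1) (j + 1) (by push_cast; omega) (by push_cast; ring),
          ch_eq_of _ _ (k - d + j) j (by push_cast; omega) (by push_cast; ring),
          ch_eq_of _ _ (k' - d + j + 1) (j + 1) (by push_cast; omega) (by push_cast; ring),
          ch_eq_of _ _ (k' - d + j) j (by push_cast; omega) (by push_cast; ring)]
      have hnk : (n : ℤ) - k = ((n - k : ℕ) : ℤ) := by omega
      have hnk' : (n : ℤ) - k' = ((n - k' : ℕ) : ℤ) := by omega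
      rw [hnk, hnk']
      have key := mono_lemma (k' - k) (k - d) (n - k) j (by omega)
      have e1 : k - d + (k' - k) = k' - d := by omega
      have e2 : n - k - (k' - k) = n - k' := by omega
      rw [e1, e2] at key
      push_cast
      exact_mod_cast key
end
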